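/- Let w = (1/8)I + (η_AB/4)(V_{AB} − I/2) + (η_AC/4)(V_{AC} − I/2) + (η_BC/4)(V_{BC} − I/2) on (C²)^{⊗3} with η_AB = η_AC = η_BC = η. Then the expectation of w in the product state |ψ⟩ = |θ=0⟩ ⊗ |θ=2π/3⟩ ⊗ |θ=4π/3⟩, where |θ⟩ = cos θ |0⟩ + sin θ |1⟩, equals (1/8)(1 − (3/2)η); in particular it is nonnegative iff η ≤ 2/3. -/
import Mathlib


open Matrix BigOperators
open scoped ComplexOrder

abbrev Tri := Fin 2 × Fin 2 × Fin 2

/-- Swap of qubits A and B in `(C²)^{⊗3}`. -/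
noncomputable def VAB : Matrix Tri Tri ℂ :=
  fun p q => if p.1 = q.2.1 ∧ p.2.1 = q.1 ∧ p.2.2 = q.2.2 then 1 else 0

/-- Swap of qubits A and C in `(C²)^{⊗3}`. -/
noncomputable def VAC : Matrix Tri Tri ℂ :=
  fun p q => if p.1 = q.2.2 ∧ p.2.2 = q.1 ∧ p.2.1 = q.2.1 then 1 else 0

/-- Swap of qubits B and C in `(C²)^{⊗3}`. -/
noncomputable def VBC : Matrix Tri Tri ℂ :=
  fun p q => if p.2.1 = q.2.2 ∧ p.2.2 = q.2.1 ∧ p.1 = q.1 then 1 else 0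

/-- The real unit vector `cos θ |0⟩ + sin θ |1⟩` in `C²`. -/
noncomputable def blochVec (θ : ℝ) : Fin 2 → ℂ :=
  fun i => if i = 0 then (Real.cos θ : ℂ) else (Real.sin θ : ℂ)

/-- The product vector `|θ=0⟩ ⊗ |θ=2π/3⟩ ⊗ |θ=4π/3⟩`. -/
noncomputable def prodVec : Tri → ℂ :=
  fun p => blochVec 0 p.1 * blochVec (2 * Real.pi / 3) p.2.1 * blochVec (4 * Real.pi / 3) p.2.2

/-- The symmetric tripartite Werner operator with `η_AB = η_AC = η_BC = η`. -/
noncomputable def wEta (η : ℝ) : Matrix Tri Tri ℂ :=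
  (1 / 8 : ℝ) • (1 : Matrix Tri Tri ℂ)
    + (η / 4) • (VAB - (1 / 2 : ℝ) • (1 : Matrix Tri Tri ℂ))
    + (η / 4) • (VAC - (1 / 2 : ℝ) • (1 : Matrix Tri Tri ℂ))
    + (η / 4) • (VBC - (1 / 2 : ℝ) • (1 : Matrix Tri Tri ℂ))

theorem stmt17 (η : ℝ) :
    star prodVec ⬝ᵥ (wEta η) *ᵥ prodVec = (((1 / 8) * (1 - (3 / 2) * η) : ℝ) : ℂ) ∧
    (0 ≤ star prodVec ⬝ᵥ (wEta η) *ᵥ prodVec ↔ η ≤ 2 / 3) := by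
  have c2 : Real.cos (2 * Real.pi / 3) = -(1/2) := by
    rw [show (2 * Real.pi / 3) = Real.pi - Real.pi/3 by ring, Real.cos_pi_sub, Real.cos_pi_div_three]
  have s2 : Real.sin (2 * Real.pi / 3) = Real.sqrt 3 / 2 := by
    rw [show (2 * Real.pi / 3) = Real.pi - Real.pi/3 by ring, Real.sin_pi_sub, Real.sin_pi_div_three]
  have c4 : Real.cos (4 * Real.pi / 3) = -(1/2) := by
    rw [show (4 * Real.pi / 3) = Real.pi + Real.pi/3 by ring, Real.cos_add, Real.cos_pi,
      Real.sin_pi, Real.cos_pi_div_three]; ring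
  have s4 : Real.sin (4 * Real.pi / 3) = -(Real.sqrt 3 / 2) := by
    rw [show (4 * Real.pi / 3) = Real.pi + Real.pi/3 by ring, Real.sin_add, Real.cos_pi,
      Real.sin_pi, Real.sin_pi_div_three]; ring
  have h3 : Real.sqrt 3 * Real.sqrt 3 = 3 := Real.mul_self_sqrt (by norm_num)
  have key : star prodVec ⬝ᵥ (wEta η) *ᵥ prodVec = (((1 / 8) * (1 - (3 / 2) * η) : ℝ) : ℂ) := by
    simp only [dotProduct, mulVec, wEta, VAB, VAC, VBC, prodVec, blochVec,
      Matrix.add_apply, Matrix.sub_apply, Matrix.smul_apply, Matrix.one_apply,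
      Fintype.sum_prod_type, Fin.sum_univ_two, Pi.star_apply, star_mul', RCLike.star_def]
    simp only [c2, s2, c4, s4, Real.cos_zero, Real.sin_zero]
    have hsq : ((Real.sqrt 3 : ℝ) : ℂ) ^ 2 = 3 := by
      norm_cast; rw [sq, h3]
    push_cast
    simp only [_root_.map_mul, map_div₀, map_neg, _root_.map_one, map_ofNat, Complex.conj_ofReal]
    norm_num [Prod.ext_iff]
    ring_nf
    rw [show (((Real.sqrt 3 : ℝ) : ℂ)) ^ 4 = (((Real.sqrt 3 : ℝ) : ℂ)) ^ 2 * (((Real.sqrt 3 : ℝ) : ℂ)) ^ 2 by ring, hsq]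
    ring
  refine ⟨key, ?_⟩
  rw [key, Complex.zero_le_real]
  constructor <;> intro h <;> nlinarith
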